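/- arXiv:2408.16571 — 3 statements merged into one kernel-verified Lean document; each statement's English description precedes it below -/
import Mathlib

section
/- Let G be a locally profinite group and K a compact open subgroup. There is an isomorphism of ℂ-algebras between the opposite ring of the endomorphism ring End_G(c-Ind_K^G 1) of the compactly induced representation of the trivial representation, and the Hecke algebra H(G,K). -/
set_option synthInstance.maxHeartbeats 1000000
set_option maxHeartbeats 1000000

/-- The ℂ-vector space `C_c^∞(G, ℂ)`. -/
noncomputable def CcInfC (G : Type*) [Group G] [TopologicalSpace G] : Submodule ℂ (G → ℂ) where
  carrier := {f | IsLocallyConstant f ∧ HasCompactSupport f}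
  add_mem' := by
    intro f g hf hg
    exact ⟨hf.1.comp₂ hg.1 (· + ·), hf.2.add hg.2⟩
  zero_mem' := ⟨IsLocallyConstant.const 0, by
    simp [HasCompactSupport, tsupport, Function.support]⟩
  smul_mem' := by
    intro c f hf
    refine ⟨hf.1.comp (c • ·), HasCompactSupport.mono hf.2 ?_⟩
    intro x hx
    simp only [Pi.smul_apply, smul_eq_mul, Function.mem_support] at hx ⊢
    exact fun h => hx (by simp [h])

/-- A left Haar measure on `C_c^∞(G, ℂ)`. -/
structure IsHaarC {G : Type*} [Group G] [TopologicalSpace G]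
    (μ : CcInfC G →ₗ[ℂ] ℂ) : Prop where
  left_invariant : ∀ (g : G) (f f' : CcInfC G),
    (∀ x : G, (f' : G → ℂ) x = (f : G → ℂ) (g⁻¹ * x)) → μ f' = μ f
  pos : ∀ (K : Subgroup G), IsCompact (K : Set G) → IsOpen (K : Set G) →
    ∀ f : CcInfC G, (f : G → ℂ) = Set.indicator (K : Set G) 1 →
      ∃ r : ℚ, 0 < r ∧ μ f = (r : ℂ)

/-- `H(G,K)`: bi-`K`-invariant compactly supported ℂ-valued functions. -/
noncomputable def HeckeSpace (G : Type*) [Group G] [TopologicalSpace G] (K : Subgroup G) :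
    Submodule ℂ (G → ℂ) where
  carrier := {f | HasCompactSupport f ∧
    ∀ k₁ ∈ K, ∀ k₂ ∈ K, ∀ x : G, f (k₁ * x * k₂) = f x}
  add_mem' := by
    intro f g hf hg
    exact ⟨hf.1.add hg.1, fun k₁ h₁ k₂ h₂ x => by
      simp [hf.2 k₁ h₁ k₂ h₂ x, hg.2 k₁ h₁ k₂ h₂ x]⟩
  zero_mem' := ⟨by simp [HasCompactSupport, tsupport, Function.support],
    fun _ _ _ _ _ => rfl⟩
  smul_mem' := by
    intro c f hf
    refine ⟨HasCompactSupport.mono hf.1 ?_, fun k₁ h₁ k₂ h₂ x => by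
      simp [hf.2 k₁ h₁ k₂ h₂ x]⟩
    intro x hx
    simp only [Pi.smul_apply, smul_eq_mul, Function.mem_support] at hx ⊢
    exact fun h => hx (by simp [h])

/-- The compact induction `c-Ind_K^G 1`: compactly supported functions
`f : G → ℂ` with `f(kx) = f(x)` for `k ∈ K`. -/
noncomputable def cInd (G : Type*) [Group G] [TopologicalSpace G] (K : Subgroup G) :
    Submodule ℂ (G → ℂ) where
  carrier := {f | HasCompactSupport f ∧ ∀ k ∈ K, ∀ x : G, f (k * x) = f x}
  add_mem' := by
    intro f g hf hg
    exact ⟨hf.1.add hg.1, fun k hk x => by simp [hf.2 k hk x, hg.2 k hk x]⟩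
  zero_mem' := ⟨by simp [HasCompactSupport, tsupport, Function.support],
    fun _ _ _ => rfl⟩
  smul_mem' := by
    intro c f hf
    refine ⟨HasCompactSupport.mono hf.1 ?_, fun k hk x => by simp [hf.2 k hk x]⟩
    intro x hx
    simp only [Pi.smul_apply, smul_eq_mul, Function.mem_support] at hx ⊢
    exact fun h => hx (by simp [h])

/-- Right translation of `G` on `c-Ind_K^G 1`. -/
noncomputable def rightTransl (G : Type*) [Group G] [TopologicalSpace G]
    [IsTopologicalGroup G] (K : Subgroup G) (g : G) : cInd G K →ₗ[ℂ] cInd G K where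
  toFun f := ⟨fun x => (f : G → ℂ) (x * g),
    ⟨f.2.1.comp_homeomorph (Homeomorph.mulRight g),
     fun k hk x => by simpa [mul_assoc] using f.2.2 k hk (x * g)⟩⟩
  map_add' f₁ f₂ := rfl
  map_smul' c f := rfl

/-- The algebra of `G`-equivariant endomorphisms of `c-Ind_K^G 1`. -/
noncomputable def EquivariantEnd (G : Type*) [Group G] [TopologicalSpace G]
    [IsTopologicalGroup G] (K : Subgroup G) : Subalgebra ℂ (Module.End ℂ (cInd G K)) where
  carrier := {T | ∀ (g : G) (f : cInd G K),
    T (rightTransl G K g f) = rightTransl G K g (T f)}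
  add_mem' := by intro a b ha hb g f; simp [ha g f, hb g f]
  mul_mem' := by intro a b ha hb g f; simp [Module.End.mul_apply, hb g f, ha g _]
  algebraMap_mem' := by
    intro c g f
    simp [Module.algebraMap_end_apply]

namespace HeckeAux

set_option linter.unusedSectionVars false
set_option linter.unusedVariables false

open Function Pointwise

variable {G : Type*} [Group G] [TopologicalSpace G] [IsTopologicalGroup G] [T2Space G]
variable (K : Subgroup G)

/-- The indicator function of `K`. -/
noncomputable def eFun : G → ℂ := Set.indicator (K : Set G) 1

theorem eFun_of_mem {x : G} (hx : x ∈ K) : eFun K x = 1 := by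
  simp [eFun, Set.indicator_of_mem hx]

theorem eFun_of_not_mem {x : G} (hx : x ∉ K) : eFun K x = 0 :=
  Set.indicator_of_notMem hx 1

theorem eFun_mul_left {k : G} (hk : k ∈ K) (x : G) : eFun K (k * x) = eFun K x := by
  by_cases hx : x ∈ K
  · rw [eFun_of_mem K hx, eFun_of_mem K (K.mul_mem hk hx)]
  · have h2 : k * x ∉ K := fun h => hx (by simpa using K.mul_mem (K.inv_mem hk) h)
    rw [eFun_of_not_mem K hx, eFun_of_not_mem K h2]

theorem eFun_mul_right {k : G} (hk : k ∈ K) (x : G) : eFun K (x * k) = eFun K x := by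
  by_cases hx : x ∈ K
  · rw [eFun_of_mem K hx, eFun_of_mem K (K.mul_mem hx hk)]
  · have h2 : x * k ∉ K := fun h => hx (by simpa using K.mul_mem h (K.inv_mem hk))
    rw [eFun_of_not_mem K hx, eFun_of_not_mem K h2]

theorem eFun_inv (x : G) : eFun K x⁻¹ = eFun K x := by
  by_cases hx : x ∈ K
  · rw [eFun_of_mem K hx, eFun_of_mem K (K.inv_mem hx)]
  · have h2 : x⁻¹ ∉ K := fun h => hx (by simpa using K.inv_mem h)
    rw [eFun_of_not_mem K hx, eFun_of_not_mem K h2]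

theorem support_eFun_subset : support (eFun K) ⊆ (K : Set G) := by
  intro x hx
  by_contra hxK
  exact hx (eFun_of_not_mem K hxK)

theorem hasCompactSupport_eFun (hKc : IsCompact (K : Set G)) :
    HasCompactSupport (eFun K) := by
  apply HasCompactSupport.intro hKc
  intro x hx
  exact eFun_of_not_mem K hx

theorem isLocallyConstant_eFun (hKc : IsCompact (K : Set G)) (hKo : IsOpen (K : Set G)) :
    IsLocallyConstant (eFun K) := by
  intro s
  have hcl : IsClosed (K : Set G) := hKc.isClosed
  by_cases h1 : (1 : ℂ) ∈ s <;> by_cases h0 : (0 : ℂ) ∈ s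
  · have : eFun K ⁻¹' s = Set.univ := by
      ext x; by_cases hx : x ∈ K <;> simp [eFun_of_mem K, eFun_of_not_mem K, hx, h1, h0, *]
    rw [this]; exact isOpen_univ
  · have : eFun K ⁻¹' s = (K : Set G) := by
      ext x; by_cases hx : x ∈ K <;> simp [eFun_of_mem K, eFun_of_not_mem K, hx, h1, h0, *]
    rw [this]; exact hKo
  · have : eFun K ⁻¹' s = (K : Set G)ᶜ := by
      ext x; by_cases hx : x ∈ K <;> simp [eFun_of_mem K, eFun_of_not_mem K, hx, h1, h0, *]
    rw [this]; exact hcl.isOpen_compl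
  · have : eFun K ⁻¹' s = ∅ := by
      ext x; by_cases hx : x ∈ K <;> simp [eFun_of_mem K, eFun_of_not_mem K, hx, h1, h0, *]
    rw [this]; exact isOpen_empty

/-- `1_K` as an element of `C_c^∞(G,ℂ)`. -/
noncomputable def eC (hKc : IsCompact (K : Set G)) (hKo : IsOpen (K : Set G)) : CcInfC G :=
  ⟨eFun K, isLocallyConstant_eFun K hKc hKo, hasCompactSupport_eFun K hKc⟩

/-- `1_K` as an element of `c-Ind_K^G 1`. -/
noncomputable def eI (hKc : IsCompact (K : Set G)) : cInd G K :=
  ⟨eFun K, hasCompactSupport_eFun K hKc, fun k hk x => eFun_mul_left K hk x⟩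


/-- The right-coset space `K\\G`. -/
abbrev Qr (K : Subgroup G) := Quotient (QuotientGroup.rightRel K)

theorem qr_out_eq (q : Qr K) : Quotient.mk (QuotientGroup.rightRel K) q.out = q :=
  Quotient.out_eq q

theorem qr_mem_of_eq {a b : G}
    (h : Quotient.mk (QuotientGroup.rightRel K) a = Quotient.mk (QuotientGroup.rightRel K) b) :
    b * a⁻¹ ∈ K :=
  QuotientGroup.rightRel_apply.mp (Quotient.exact h)

theorem qr_eq_of_mem {a b : G} (h : b * a⁻¹ ∈ K) :
    Quotient.mk (QuotientGroup.rightRel K) a = Quotient.mk (QuotientGroup.rightRel K) b :=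
  Quotient.sound (QuotientGroup.rightRel_apply.mpr h)

/-- A left-`K`-invariant function takes equal values on elements of the same right coset. -/
theorem left_inv_congr {f : G → ℂ} (hf : ∀ k ∈ K, ∀ x, f (k * x) = f x) {a b : G}
    (h : Quotient.mk (QuotientGroup.rightRel K) a = Quotient.mk (QuotientGroup.rightRel K) b) :
    f a = f b := by
  have hk : b * a⁻¹ ∈ K := qr_mem_of_eq K h
  have : f (b * a⁻¹ * a) = f a := hf _ hk a
  simpa using this.symm

/-- A right-`K`-invariant function: `ψ (y * a⁻¹) = ψ (y * b⁻¹)` when `Ka = Kb`. -/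
theorem right_inv_congr {ψ : G → ℂ} (hψ : ∀ k ∈ K, ∀ x, ψ (x * k) = ψ x) {a b : G}
    (h : Quotient.mk (QuotientGroup.rightRel K) a = Quotient.mk (QuotientGroup.rightRel K) b)
    (y : G) : ψ (y * a⁻¹) = ψ (y * b⁻¹) := by
  have hk : b * a⁻¹ ∈ K := qr_mem_of_eq K h
  have : ψ (y * b⁻¹ * (b * a⁻¹)) = ψ (y * b⁻¹) := hψ _ hk _
  rw [← this]
  congr 1; group

/-- Each right coset, as a fiber of the quotient map, is open. -/
theorem isOpen_qr_fiber (hKo : IsOpen (K : Set G)) (q : Qr K) :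
    IsOpen {x : G | Quotient.mk (QuotientGroup.rightRel K) x = q} := by
  have : {x : G | Quotient.mk (QuotientGroup.rightRel K) x = q}
      = (fun x : G => q.out * x⁻¹) ⁻¹' (K : Set G) := by
    ext x
    constructor
    · intro hx
      exact qr_mem_of_eq K (hx.trans (qr_out_eq K q).symm)
    · intro hx
      exact (qr_eq_of_mem K hx).trans (qr_out_eq K q)
  rw [this]
  exact hKo.preimage (continuous_const.mul continuous_inv)

/-- A compact set meets only finitely many right cosets. -/
theorem finite_qr_image (hKo : IsOpen (K : Set G)) {C : Set G} (hC : IsCompact C) :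
    ((fun x : G => Quotient.mk (QuotientGroup.rightRel K) x) '' C).Finite := by
  obtain ⟨t, ht⟩ := hC.elim_finite_subcover
    (fun q : Qr K => {x : G | Quotient.mk (QuotientGroup.rightRel K) x = q})
    (isOpen_qr_fiber K hKo)
    (fun x _ => Set.mem_iUnion.2 ⟨Quotient.mk (QuotientGroup.rightRel K) x, rfl⟩)
  refine t.finite_toSet.subset ?_
  rintro q ⟨x, hx, rfl⟩
  obtain ⟨i, hi⟩ := Set.mem_iUnion.mp (ht hx)
  obtain ⟨hit, hxi⟩ := Set.mem_iUnion.mp hi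
  simp only [Set.mem_setOf_eq] at hxi
  subst hxi
  exact hit

/-- The support of `q ↦ f q.out` is finite for compactly supported `f`. -/
theorem finite_qr_support (hKo : IsOpen (K : Set G)) {f : G → ℂ} (hf : HasCompactSupport f) :
    {q : Qr K | f q.out ≠ 0}.Finite := by
  refine (finite_qr_image K hKo hf).subset ?_
  intro q hq
  exact ⟨q.out, subset_tsupport f hq, qr_out_eq K q⟩

/-- Decomposition of a left-`K`-invariant function as a sum over right cosets. -/
theorem sum_decomp {f : G → ℂ} (hfl : ∀ k ∈ K, ∀ x, f (k * x) = f x)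
    (s : Finset (Qr K)) (hs : ∀ q : Qr K, f q.out ≠ 0 → q ∈ s) (x : G) :
    f x = ∑ q ∈ s, f q.out * eFun K (x * q.out⁻¹) := by
  set q₀ : Qr K := Quotient.mk (QuotientGroup.rightRel K) x with hq₀
  have hvanish : ∀ q : Qr K, q ≠ q₀ → f q.out * eFun K (x * q.out⁻¹) = 0 := by
    intro q hq
    have hnm : x * q.out⁻¹ ∉ K := by
      intro hmem
      exact hq ((qr_out_eq K q).symm.trans ((qr_eq_of_mem K hmem).trans hq₀.symm))
    rw [eFun_of_not_mem K hnm, mul_zero]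
  have hfx : f x = f q₀.out :=
    left_inv_congr K hfl (hq₀.symm.trans (qr_out_eq K q₀).symm)
  by_cases hq₀s : q₀ ∈ s
  · rw [Finset.sum_eq_single q₀ (fun q _ hq => hvanish q hq) (fun h => absurd hq₀s h)]
    have hmem : x * q₀.out⁻¹ ∈ K := qr_mem_of_eq K ((qr_out_eq K q₀).trans hq₀)
    rw [eFun_of_mem K hmem, mul_one, ← hfx]
  · have hz : f q₀.out = 0 := by
      by_contra hne
      exact hq₀s (hs q₀ hne)
    rw [hfx, hz]
    exact (Finset.sum_eq_zero fun q hqs => by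
      by_cases hq : q = q₀
      · rw [hq, hz, zero_mul]
      · exact hvanish q hq).symm


section Equivariant

variable (hKc : IsCompact (K : Set G))

/-- `1_{Kr}` as an element of `c-Ind`, via right translation of `1_K`. -/
theorem rightTransl_eI_apply (r x : G) :
    ((rightTransl G K r⁻¹ (eI K hKc) : cInd G K) : G → ℂ) x = eFun K (x * r⁻¹) := rfl

/-- `rightTransl` by an element of `K` fixes `1_K`. -/
theorem rightTransl_eI {k : G} (hk : k ∈ K) : rightTransl G K k (eI K hKc) = eI K hKc := by
  apply Subtype.ext
  funext x
  exact eFun_mul_right K hk x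

/-- For an equivariant `S`, `S 1_K` is right-`K`-invariant. -/
theorem Se_right_invariant {S : Module.End ℂ (cInd G K)} (hS : S ∈ EquivariantEnd G K) :
    ∀ k ∈ K, ∀ x : G, ((S (eI K hKc) : cInd G K) : G → ℂ) (x * k)
      = ((S (eI K hKc) : cInd G K) : G → ℂ) x := by
  intro k hk x
  have h1 : S (rightTransl G K k (eI K hKc)) = rightTransl G K k (S (eI K hKc)) := hS k _
  rw [rightTransl_eI K hKc hk] at h1
  exact (congrFun (congrArg (fun v : cInd G K => (v : G → ℂ)) h1) x).symm

/-- Key lemma: an equivariant endomorphism is determined by its value on `1_K`. -/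
theorem equivariant_apply {S : Module.End ℂ (cInd G K)} (hS : S ∈ EquivariantEnd G K)
    (hKo : IsOpen (K : Set G)) (f : cInd G K) (x : G) :
    ((S f : cInd G K) : G → ℂ) x
      = ∑ᶠ q : Qr K, (f : G → ℂ) q.out * ((S (eI K hKc) : cInd G K) : G → ℂ) (x * q.out⁻¹) := by
  classical
  have hfin : {q : Qr K | (f : G → ℂ) q.out ≠ 0}.Finite := finite_qr_support K hKo f.2.1
  set s : Finset (Qr K) := hfin.toFinset with hsdef
  have hs : ∀ q : Qr K, (f : G → ℂ) q.out ≠ 0 → q ∈ s := fun q hq => hfin.mem_toFinset.mpr hq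
  have hdecomp : f = ∑ q ∈ s, ((f : G → ℂ) q.out) • rightTransl G K q.out⁻¹ (eI K hKc) := by
    apply Subtype.ext
    funext y
    rw [show (((∑ q ∈ s, ((f : G → ℂ) q.out) • rightTransl G K q.out⁻¹ (eI K hKc)) : cInd G K) : G → ℂ) y
        = ∑ q ∈ s, (f : G → ℂ) q.out * eFun K (y * q.out⁻¹) from by
      rw [AddSubmonoidClass.coe_finset_sum, Finset.sum_apply]
      exact Finset.sum_congr rfl fun q _ => rfl]
    exact sum_decomp K f.2.2 s hs y
  have happ : S f = ∑ q ∈ s, ((f : G → ℂ) q.out) • rightTransl G K q.out⁻¹ (S (eI K hKc)) := by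
    conv_lhs => rw [hdecomp, map_sum]
    exact Finset.sum_congr rfl fun q _ => by rw [map_smul, hS q.out⁻¹ (eI K hKc)]
  have hval : ((S f : cInd G K) : G → ℂ) x
      = ∑ q ∈ s, (f : G → ℂ) q.out * ((S (eI K hKc) : cInd G K) : G → ℂ) (x * q.out⁻¹) := by
    rw [happ, AddSubmonoidClass.coe_finset_sum, Finset.sum_apply]
    exact Finset.sum_congr rfl fun q _ => rfl
  rw [hval]
  refine (finsum_eq_sum_of_support_subset _ ?_).symm
  intro q hq
  have : (f : G → ℂ) q.out ≠ 0 := fun h => hq (by simp [Function.mem_support, h])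
  simpa [hsdef, hfin.mem_toFinset] using this

end Equivariant


section Tpsi

variable (hKc : IsCompact (K : Set G))

/-- The operator on `c-Ind` attached to a bi-invariant kernel `ψ`. -/
noncomputable def Tpsi (ψ : G → ℂ) (f : cInd G K) : G → ℂ :=
  fun x => ∑ᶠ q : Qr K, (f : G → ℂ) q.out * ψ (x * q.out⁻¹)

theorem Tpsi_support_finite (hKo : IsOpen (K : Set G)) (ψ : G → ℂ) (f : cInd G K) (x : G) :
    (Function.support fun q : Qr K => (f : G → ℂ) q.out * ψ (x * q.out⁻¹)).Finite := by
  refine (finite_qr_support K hKo f.2.1).subset ?_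
  intro q hq
  simp only [Function.mem_support] at hq
  exact fun h => hq (by rw [h, zero_mul])

theorem Tpsi_mem (ψ : G → ℂ) (hψl : ∀ k ∈ K, ∀ g, ψ (k * g) = ψ g)
    (hψc : HasCompactSupport ψ) (f : cInd G K) : Tpsi K ψ f ∈ cInd G K := by
  constructor
  · apply HasCompactSupport.intro (hψc.isCompact.mul f.2.1.isCompact :
      IsCompact (tsupport ψ * tsupport (f : G → ℂ)))
    intro x hx
    apply finsum_eq_zero_of_forall_eq_zero
    intro q
    by_cases hf : (f : G → ℂ) q.out = 0
    · rw [hf, zero_mul]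
    by_cases hψ : ψ (x * q.out⁻¹) = 0
    · rw [hψ, mul_zero]
    exfalso
    apply hx
    have : x = (x * q.out⁻¹) * q.out := by group
    rw [this]
    exact Set.mul_mem_mul (subset_tsupport ψ hψ) (subset_tsupport _ hf)
  · intro k hk x
    apply finsum_congr
    intro q
    rw [mul_assoc, hψl k hk]

theorem Tpsi_add (hKo : IsOpen (K : Set G)) (ψ : G → ℂ) (f g : cInd G K) (x : G) :
    Tpsi K ψ (f + g) x = Tpsi K ψ f x + Tpsi K ψ g x := by
  have h : ∀ q : Qr K, ((f + g : cInd G K) : G → ℂ) q.out * ψ (x * q.out⁻¹)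
      = (f : G → ℂ) q.out * ψ (x * q.out⁻¹) + (g : G → ℂ) q.out * ψ (x * q.out⁻¹) := by
    intro q
    rw [show ((f + g : cInd G K) : G → ℂ) q.out = (f : G → ℂ) q.out + (g : G → ℂ) q.out from rfl,
      add_mul]
  rw [show Tpsi K ψ (f + g) x = ∑ᶠ q : Qr K, ((f : G → ℂ) q.out * ψ (x * q.out⁻¹)
      + (g : G → ℂ) q.out * ψ (x * q.out⁻¹)) from finsum_congr h]
  exact finsum_add_distrib (Tpsi_support_finite K hKo ψ f x) (Tpsi_support_finite K hKo ψ g x)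

theorem Tpsi_smul (hKo : IsOpen (K : Set G)) (ψ : G → ℂ) (c : ℂ) (f : cInd G K) (x : G) :
    Tpsi K ψ (c • f) x = c * Tpsi K ψ f x := by
  rw [show Tpsi K ψ (c • f) x = ∑ᶠ q : Qr K, c * ((f : G → ℂ) q.out * ψ (x * q.out⁻¹)) from
    finsum_congr fun q => by
      rw [show ((c • f : cInd G K) : G → ℂ) q.out = c * (f : G → ℂ) q.out from rfl, mul_assoc]]
  exact (mul_finsum _ c).symm

/-- Right multiplication by `t` on the right-coset space. -/
noncomputable def shiftQ (t : G) : Qr K → Qr K :=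
  Quotient.lift (fun g => Quotient.mk (QuotientGroup.rightRel K) (g * t))
    (fun a b h => Quotient.sound (QuotientGroup.rightRel_apply.mpr (by
      have h1 := QuotientGroup.rightRel_apply.mp h
      have h2 : b * t * (a * t)⁻¹ = b * a⁻¹ := by group
      rw [h2]; exact h1)))

theorem shiftQ_mk (t a : G) :
    shiftQ K t (Quotient.mk (QuotientGroup.rightRel K) a)
      = Quotient.mk (QuotientGroup.rightRel K) (a * t) := rfl

theorem shiftQ_bij (t : G) : Function.Bijective (shiftQ K t) := by
  apply Function.bijective_iff_has_inverse.mpr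
  refine ⟨shiftQ K t⁻¹, ?_, ?_⟩ <;> intro q <;> induction q using Quotient.ind <;>
    simp [shiftQ, mul_assoc]

theorem Tpsi_rightTransl (ψ : G → ℂ) (hψr : ∀ k ∈ K, ∀ g, ψ (g * k) = ψ g)
    (t : G) (f : cInd G K) (x : G) :
    Tpsi K ψ (rightTransl G K t f) x = Tpsi K ψ f (x * t) := by
  apply finsum_eq_of_bijective (shiftQ K t) (shiftQ_bij K t)
  intro q
  set u : G := (shiftQ K t q).out with hu
  have hqu : Quotient.mk (QuotientGroup.rightRel K) (q.out * t)
      = Quotient.mk (QuotientGroup.rightRel K) u := by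
    rw [← shiftQ_mk, qr_out_eq, qr_out_eq]
  have hf : ((rightTransl G K t f : cInd G K) : G → ℂ) q.out = (f : G → ℂ) u := by
    rw [show ((rightTransl G K t f : cInd G K) : G → ℂ) q.out = (f : G → ℂ) (q.out * t) from rfl]
    exact left_inv_congr K f.2.2 hqu
  have hψeq : ψ (x * q.out⁻¹) = ψ (x * t * u⁻¹) := by
    have h1 : x * q.out⁻¹ = (x * t) * (q.out * t)⁻¹ := by group
    rw [h1]
    exact right_inv_congr K hψr hqu (x * t)
  rw [hf, hψeq]

theorem Tpsi_eI (ψ : G → ℂ) (hψr : ∀ k ∈ K, ∀ g, ψ (g * k) = ψ g) (x : G) :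
    Tpsi K ψ (eI K hKc) x = ψ x := by
  set q₁ : Qr K := Quotient.mk (QuotientGroup.rightRel K) 1 with hq₁
  have h1 : ∀ q : Qr K, q ≠ q₁ →
      ((eI K hKc : cInd G K) : G → ℂ) q.out * ψ (x * q.out⁻¹) = 0 := by
    intro q hq
    have : q.out ∉ K := by
      intro hmem
      have : Quotient.mk (QuotientGroup.rightRel K) (1 : G)
          = Quotient.mk (QuotientGroup.rightRel K) q.out :=
        qr_eq_of_mem K (by simpa using hmem)
      exact hq ((qr_out_eq K q).symm.trans (this.symm.trans hq₁.symm) |>.symm ▸ rfl)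
    rw [show ((eI K hKc : cInd G K) : G → ℂ) q.out = eFun K q.out from rfl,
      eFun_of_not_mem K this, zero_mul]
  rw [show Tpsi K ψ (eI K hKc) x
      = ∑ᶠ q : Qr K, ((eI K hKc : cInd G K) : G → ℂ) q.out * ψ (x * q.out⁻¹) from rfl,
    finsum_eq_single _ q₁ h1]
  have hmem : q₁.out ∈ K := by
    have := qr_mem_of_eq K ((qr_out_eq K q₁).trans hq₁)
    simpa using this
  rw [show ((eI K hKc : cInd G K) : G → ℂ) q₁.out = eFun K q₁.out from rfl,
    eFun_of_mem K hmem, one_mul]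
  exact hψr q₁.out⁻¹ (K.inv_mem hmem) x

end Tpsi


section LeftCosets

theorem ql_out_eq (p : G ⧸ K) : QuotientGroup.mk p.out = p := QuotientGroup.out_eq' p

theorem ql_mem_of_eq {a b : G} (h : (QuotientGroup.mk a : G ⧸ K) = QuotientGroup.mk b) :
    a⁻¹ * b ∈ K := QuotientGroup.eq.mp h

theorem ql_eq_of_mem {a b : G} (h : a⁻¹ * b ∈ K) :
    (QuotientGroup.mk a : G ⧸ K) = QuotientGroup.mk b := QuotientGroup.eq.mpr h

theorem isOpen_ql_fiber (hKo : IsOpen (K : Set G)) (p : G ⧸ K) :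
    IsOpen {x : G | (QuotientGroup.mk x : G ⧸ K) = p} := by
  have : {x : G | (QuotientGroup.mk x : G ⧸ K) = p}
      = (fun x : G => x⁻¹ * p.out) ⁻¹' (K : Set G) := by
    ext x
    constructor
    · intro hx
      exact ql_mem_of_eq K (hx.trans (ql_out_eq K p).symm)
    · intro hx
      exact (ql_eq_of_mem K hx).trans (ql_out_eq K p)
  rw [this]
  exact hKo.preimage (continuous_inv.mul continuous_const)

theorem finite_ql_image (hKo : IsOpen (K : Set G)) {C : Set G} (hC : IsCompact C) :
    ((fun x : G => (QuotientGroup.mk x : G ⧸ K)) '' C).Finite := by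
  obtain ⟨t, ht⟩ := hC.elim_finite_subcover
    (fun p : G ⧸ K => {x : G | (QuotientGroup.mk x : G ⧸ K) = p})
    (isOpen_ql_fiber K hKo)
    (fun x _ => Set.mem_iUnion.2 ⟨QuotientGroup.mk x, rfl⟩)
  refine t.finite_toSet.subset ?_
  rintro p ⟨x, hx, rfl⟩
  obtain ⟨i, hi⟩ := Set.mem_iUnion.mp (ht hx)
  obtain ⟨hit, hxi⟩ := Set.mem_iUnion.mp hi
  simp only [Set.mem_setOf_eq] at hxi
  subst hxi
  exact hit

/-- Decomposition of a right-`K`-invariant function as a sum over left cosets. -/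
theorem sum_decomp_left {F : G → ℂ} (hFr : ∀ k ∈ K, ∀ g, F (g * k) = F g)
    (s : Finset (G ⧸ K)) (hs : ∀ p : G ⧸ K, F p.out ≠ 0 → p ∈ s) (g : G) :
    F g = ∑ p ∈ s, F p.out * eFun K (p.out⁻¹ * g) := by
  set p₀ : G ⧸ K := QuotientGroup.mk g with hp₀
  have hFg : F g = F p₀.out := by
    have hk : g⁻¹ * p₀.out ∈ K := ql_mem_of_eq K (hp₀.symm.trans (ql_out_eq K p₀).symm)
    have : F (g * (g⁻¹ * p₀.out)) = F g := hFr _ hk g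
    rw [← this]
    congr 1
    group
  have hvanish : ∀ p : G ⧸ K, p ≠ p₀ → F p.out * eFun K (p.out⁻¹ * g) = 0 := by
    intro p hp
    have hnm : p.out⁻¹ * g ∉ K := by
      intro hmem
      exact hp ((ql_out_eq K p).symm.trans ((ql_eq_of_mem K (by simpa using hmem)).trans hp₀.symm))
    rw [eFun_of_not_mem K hnm, mul_zero]
  by_cases hp₀s : p₀ ∈ s
  · rw [Finset.sum_eq_single p₀ (fun p _ hp => hvanish p hp) (fun h => absurd hp₀s h)]
    have hmem : p₀.out⁻¹ * g ∈ K := by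
      have := ql_mem_of_eq K ((ql_out_eq K p₀).trans hp₀)
      simpa using this
    rw [eFun_of_mem K hmem, mul_one, ← hFg]
  · have hz : F p₀.out = 0 := by
      by_contra hne
      exact hp₀s (hs p₀ hne)
    rw [hFg, hz]
    exact (Finset.sum_eq_zero fun p hps => by
      by_cases hp : p = p₀
      · rw [hp, hz, zero_mul]
      · exact hvanish p hp).symm

/-- Left translate of an element of `C_c^∞`. -/
noncomputable def lTransC (y : G) (f : CcInfC G) : CcInfC G :=
  ⟨fun g => (f : G → ℂ) (y⁻¹ * g),
    ⟨f.2.1.comp_continuous (continuous_const.mul continuous_id),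
     f.2.2.comp_homeomorph (Homeomorph.mulLeft y⁻¹)⟩⟩

theorem mu_lTransC (μ : CcInfC G →ₗ[ℂ] ℂ) (hμ : IsHaarC μ) (y : G) (f : CcInfC G) :
    μ (lTransC y f) = μ f :=
  hμ.left_invariant y f (lTransC y f) (fun _ => rfl)

/-- The Haar functional of a compactly supported right-`K`-invariant function. -/
theorem mu_eq (μ : CcInfC G →ₗ[ℂ] ℂ) (hμ : IsHaarC μ)
    (hKc : IsCompact (K : Set G)) (hKo : IsOpen (K : Set G))
    {F : G → ℂ} (hFr : ∀ k ∈ K, ∀ g, F (g * k) = F g)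
    (hfin : {p : G ⧸ K | F p.out ≠ 0}.Finite)
    (h : CcInfC G) (hh : (h : G → ℂ) = F) :
    μ h = (∑ᶠ p : G ⧸ K, F p.out) * μ (eC K hKc hKo) := by
  classical
  set s : Finset (G ⧸ K) := hfin.toFinset with hsdef
  have hs : ∀ p : G ⧸ K, F p.out ≠ 0 → p ∈ s := fun p hp => hfin.mem_toFinset.mpr hp
  have hdecomp : h = ∑ p ∈ s, F p.out • lTransC p.out (eC K hKc hKo) := by
    apply Subtype.ext
    funext g
    rw [show (((∑ p ∈ s, F p.out • lTransC p.out (eC K hKc hKo)) : CcInfC G) : G → ℂ) g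
        = ∑ p ∈ s, F p.out * eFun K (p.out⁻¹ * g) from by
      rw [AddSubmonoidClass.coe_finset_sum, Finset.sum_apply]
      exact Finset.sum_congr rfl fun p _ => rfl]
    rw [hh]
    exact sum_decomp_left K hFr s hs g
  rw [hdecomp, map_sum]
  rw [show ∑ p ∈ s, μ (F p.out • lTransC p.out (eC K hKc hKo))
      = ∑ p ∈ s, F p.out * μ (eC K hKc hKo) from
    Finset.sum_congr rfl fun p _ => by rw [map_smul, mu_lTransC μ hμ, smul_eq_mul]]
  rw [← Finset.sum_mul]
  congr 1
  refine (finsum_eq_sum_of_support_subset (fun p : G ⧸ K => F p.out) ?_).symm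
  intro p hp
  simpa [hsdef, hfin.mem_toFinset] using hp

end LeftCosets

section Reindex

/-- The inverse map from left to right cosets. -/
noncomputable def invQP : G ⧸ K → Qr K :=
  Quotient.lift (fun g => Quotient.mk (QuotientGroup.rightRel K) g⁻¹)
    (fun a b h => Quotient.sound (QuotientGroup.rightRel_apply.mpr
      (by simpa using K.inv_mem (QuotientGroup.leftRel_apply.mp h))))

noncomputable def invPQ : Qr K → G ⧸ K :=
  Quotient.lift (fun g => (QuotientGroup.mk g⁻¹ : G ⧸ K))
    (fun a b h => Quotient.sound (QuotientGroup.leftRel_apply.mpr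
      (by simpa using K.inv_mem (QuotientGroup.rightRel_apply.mp h))))

theorem invQP_bij : Function.Bijective (invQP K) := by
  apply Function.bijective_iff_has_inverse.mpr
  refine ⟨invPQ K, ?_, ?_⟩ <;> intro p <;> induction p using Quotient.ind <;> simp [invQP, invPQ]

theorem invQP_mk (a : G) :
    invQP K (QuotientGroup.mk a) = Quotient.mk (QuotientGroup.rightRel K) a⁻¹ := rfl

/-- Reindexing a convolution-type sum from left to right cosets. -/
theorem finsum_reindex {A B : G → ℂ} (hAl : ∀ k ∈ K, ∀ g, A (k * g) = A g)
    (hBr : ∀ k ∈ K, ∀ g, B (g * k) = B g) (x : G) :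
    ∑ᶠ p : G ⧸ K, A p.out⁻¹ * B (x⁻¹ * p.out)
      = ∑ᶠ q : Qr K, A q.out * B (x⁻¹ * q.out⁻¹) := by
  apply finsum_eq_of_bijective (invQP K) (invQP_bij K)
  intro p
  set u : G := (invQP K p).out with hu
  have hqu : Quotient.mk (QuotientGroup.rightRel K) p.out⁻¹
      = Quotient.mk (QuotientGroup.rightRel K) u := by
    rw [← invQP_mk, ql_out_eq, qr_out_eq]
  have hA : A p.out⁻¹ = A u := left_inv_congr K hAl hqu
  have hB : B (x⁻¹ * p.out) = B (x⁻¹ * u⁻¹) := by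
    have h1 : x⁻¹ * p.out = x⁻¹ * (p.out⁻¹)⁻¹ := by group
    rw [h1]
    exact right_inv_congr K hBr hqu x⁻¹
  rw [hA, hB]

end Reindex


section Phi

variable (hKc : IsCompact (K : Set G))

/-- The function underlying `Φ T` belongs to the Hecke algebra. -/
theorem heckeFun_mem (T : EquivariantEnd G K) (c : ℂ) :
    (fun g : G => c * (((T : Module.End ℂ (cInd G K)) (eI K hKc) : cInd G K) : G → ℂ) g⁻¹)
      ∈ HeckeSpace G K := by
  constructor
  · have h1 : HasCompactSupport
        (((T : Module.End ℂ (cInd G K)) (eI K hKc) : cInd G K) : G → ℂ) :=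
      ((T : Module.End ℂ (cInd G K)) (eI K hKc)).2.1
    have h2 : HasCompactSupport
        (fun g : G => (((T : Module.End ℂ (cInd G K)) (eI K hKc) : cInd G K) : G → ℂ) g⁻¹) :=
      h1.comp_homeomorph (Homeomorph.inv G)
    refine h2.mono ?_
    intro x hx
    simp only [Function.mem_support] at hx ⊢
    exact fun hzero => hx (by rw [hzero, mul_zero])
  · intro k₁ h₁ k₂ h₂ x
    have harg : (((T : Module.End ℂ (cInd G K)) (eI K hKc) : cInd G K) : G → ℂ) (k₁ * x * k₂)⁻¹
        = (((T : Module.End ℂ (cInd G K)) (eI K hKc) : cInd G K) : G → ℂ) x⁻¹ := by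
      rw [show (k₁ * x * k₂)⁻¹ = k₂⁻¹ * (x⁻¹ * k₁⁻¹) by group]
      rw [((T : Module.End ℂ (cInd G K)) (eI K hKc)).2.2 k₂⁻¹ (K.inv_mem h₂) (x⁻¹ * k₁⁻¹)]
      exact Se_right_invariant K hKc T.2 k₁⁻¹ (K.inv_mem h₁) x⁻¹
    show c * _ = c * _
    rw [harg]

/-- The linear map `Φ : End_G(c-Ind) → H(G,K)`, `T ↦ c ⋅ (T 1_K)(·⁻¹)`. -/
noncomputable def PhiMap (c : ℂ) : EquivariantEnd G K →ₗ[ℂ] HeckeSpace G K where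
  toFun T := ⟨fun g : G =>
      c * (((T : Module.End ℂ (cInd G K)) (eI K hKc) : cInd G K) : G → ℂ) g⁻¹,
    heckeFun_mem K hKc T c⟩
  map_add' S T := by
    apply Subtype.ext
    funext g
    show c * (((S + T : EquivariantEnd G K) : Module.End ℂ (cInd G K)) (eI K hKc) : G → ℂ) g⁻¹
      = _
    rw [show ((S + T : EquivariantEnd G K) : Module.End ℂ (cInd G K))
        = (S : Module.End ℂ (cInd G K)) + (T : Module.End ℂ (cInd G K)) from rfl]
    rw [LinearMap.add_apply]
    show c * ((((S : Module.End ℂ (cInd G K)) (eI K hKc) : cInd G K) : G → ℂ) g⁻¹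
      + (((T : Module.End ℂ (cInd G K)) (eI K hKc) : cInd G K) : G → ℂ) g⁻¹) = _
    rw [mul_add]
    rfl
  map_smul' a T := by
    apply Subtype.ext
    funext g
    show c * (((a • T : EquivariantEnd G K) : Module.End ℂ (cInd G K)) (eI K hKc) : G → ℂ) g⁻¹
      = _
    rw [show ((a • T : EquivariantEnd G K) : Module.End ℂ (cInd G K))
        = a • (T : Module.End ℂ (cInd G K)) from rfl]
    rw [LinearMap.smul_apply]
    show c * (a * (((T : Module.End ℂ (cInd G K)) (eI K hKc) : cInd G K) : G → ℂ) g⁻¹) = _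
    show _ = a * (c * (((T : Module.End ℂ (cInd G K)) (eI K hKc) : cInd G K) : G → ℂ) g⁻¹)
    ring

theorem PhiMap_apply (c : ℂ) (T : EquivariantEnd G K) (g : G) :
    ((PhiMap K hKc c T : HeckeSpace G K) : G → ℂ) g
      = c * (((T : Module.End ℂ (cInd G K)) (eI K hKc) : cInd G K) : G → ℂ) g⁻¹ := rfl

end Phi

end HeckeAux

open HeckeAux

/-- **`End_G(c-Ind_K^G 1)^op ≅ H(G,K)`**: there is a ℂ-linear bijection `Φ` from
the `G`-equivariant endomorphism algebra of `c-Ind_K^G 1` to the Hecke algebra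
`H(G,K)` which is an isomorphism from the opposite ring to the convolution
algebra: `Φ(S ∘ T)` is the convolution `Φ(T) * Φ(S)`, and `Φ(id)` is the unit
`μ(K)⁻¹ · 1_K`. -/
theorem equivariantEnd_op_iso_hecke
    (G : Type*) [Group G] [TopologicalSpace G] [IsTopologicalGroup G]
    [LocallyCompactSpace G] [TotallyDisconnectedSpace G] [T2Space G]
    (μ : CcInfC G →ₗ[ℂ] ℂ) (hμ : IsHaarC μ)
    (K : Subgroup G) (hKc : IsCompact (K : Set G)) (hKo : IsOpen (K : Set G)) :
    ∃ Φ : EquivariantEnd G K ≃ₗ[ℂ] HeckeSpace G K,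
      -- anti-multiplicativity: composition goes to convolution in reverse order
      (∀ (S T : EquivariantEnd G K) (x : G) (h : CcInfC G),
        ((h : G → ℂ) =
          fun g => (Φ T : G → ℂ) g * (Φ S : G → ℂ) (g⁻¹ * x)) →
        (Φ (S * T) : G → ℂ) x = μ h) ∧
      -- the identity goes to the unit of the Hecke algebra
      (∀ hK : CcInfC G, ((hK : G → ℂ) = Set.indicator (K : Set G) 1) →
        (Φ 1 : G → ℂ) = fun x => (μ hK)⁻¹ * Set.indicator (K : Set G) 1 x) := by
  classical
  obtain ⟨r, hr, hμr⟩ := hμ.pos K hKc hKo (eC K hKc hKo) rfl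
  have hμe0 : μ (eC K hKc hKo) ≠ 0 := by
    rw [hμr]
    exact_mod_cast Rat.cast_ne_zero.mpr hr.ne'
  have hinj : Function.Injective (PhiMap K hKc (μ (eC K hKc hKo))⁻¹) := by
    intro S T hST
    have he : (((S : Module.End ℂ (cInd G K)) (eI K hKc) : cInd G K) : G → ℂ)
        = (((T : Module.End ℂ (cInd G K)) (eI K hKc) : cInd G K) : G → ℂ) := by
      funext y
      have h3 : (μ (eC K hKc hKo))⁻¹
            * (((S : Module.End ℂ (cInd G K)) (eI K hKc) : cInd G K) : G → ℂ) y⁻¹⁻¹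
          = (μ (eC K hKc hKo))⁻¹
            * (((T : Module.End ℂ (cInd G K)) (eI K hKc) : cInd G K) : G → ℂ) y⁻¹⁻¹ :=
        congrFun (congrArg (fun v : HeckeSpace G K => (v : G → ℂ)) hST) y⁻¹
      rw [inv_inv] at h3
      exact mul_left_cancel₀ (inv_ne_zero hμe0) h3
    apply Subtype.ext
    apply LinearMap.ext
    intro f
    apply Subtype.ext
    funext x
    rw [equivariant_apply K hKc S.2 hKo f x, equivariant_apply K hKc T.2 hKo f x]
    exact finsum_congr fun q => by rw [he]
  have hsurj : Function.Surjective (PhiMap K hKc (μ (eC K hKc hKo))⁻¹) := by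
    intro h
    have hψl : ∀ k ∈ K, ∀ g : G,
        μ (eC K hKc hKo) * (h : G → ℂ) (k * g)⁻¹ = μ (eC K hKc hKo) * (h : G → ℂ) g⁻¹ := by
      intro k hk g
      congr 1
      rw [show (k * g)⁻¹ = 1 * g⁻¹ * k⁻¹ by group]
      rw [h.2.2 1 K.one_mem k⁻¹ (K.inv_mem hk) g⁻¹]
    have hψr : ∀ k ∈ K, ∀ g : G,
        μ (eC K hKc hKo) * (h : G → ℂ) (g * k)⁻¹ = μ (eC K hKc hKo) * (h : G → ℂ) g⁻¹ := by
      intro k hk g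
      congr 1
      rw [show (g * k)⁻¹ = k⁻¹ * g⁻¹ * 1 by group]
      rw [h.2.2 k⁻¹ (K.inv_mem hk) 1 K.one_mem g⁻¹]
    have hψc : HasCompactSupport (fun g : G => μ (eC K hKc hKo) * (h : G → ℂ) g⁻¹) := by
      have h1 : HasCompactSupport (fun g : G => (h : G → ℂ) g⁻¹) :=
        h.2.1.comp_homeomorph (Homeomorph.inv G)
      refine h1.mono ?_
      intro x hx
      simp only [Function.mem_support] at hx ⊢
      exact fun hzero => hx (by rw [hzero, mul_zero])
    refine ⟨⟨{ toFun := fun f =>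
                ⟨Tpsi K (fun g : G => μ (eC K hKc hKo) * (h : G → ℂ) g⁻¹) f,
                 Tpsi_mem K _ hψl hψc f⟩,
               map_add' := fun f g => Subtype.ext (funext fun x =>
                 Tpsi_add K hKo (fun g : G => μ (eC K hKc hKo) * (h : G → ℂ) g⁻¹) f g x),
               map_smul' := fun a f => Subtype.ext (funext fun x =>
                 Tpsi_smul K hKo (fun g : G => μ (eC K hKc hKo) * (h : G → ℂ) g⁻¹) a f x) },
             ?_⟩, ?_⟩
    · intro t f
      apply Subtype.ext
      funext x
      exact Tpsi_rightTransl K (fun g : G => μ (eC K hKc hKo) * (h : G → ℂ) g⁻¹) hψr t f x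
    · apply Subtype.ext
      funext g
      rw [PhiMap_apply]
      show (μ (eC K hKc hKo))⁻¹
          * Tpsi K (fun g : G => μ (eC K hKc hKo) * (h : G → ℂ) g⁻¹) (eI K hKc) g⁻¹
        = (h : G → ℂ) g
      rw [Tpsi_eI K hKc (fun g : G => μ (eC K hKc hKo) * (h : G → ℂ) g⁻¹) hψr g⁻¹]
      rw [inv_inv, ← mul_assoc, inv_mul_cancel₀ hμe0, one_mul]
  have hbij : Function.Bijective (PhiMap K hKc (μ (eC K hKc hKo))⁻¹) := ⟨hinj, hsurj⟩
  refine ⟨LinearEquiv.ofBijective (PhiMap K hKc (μ (eC K hKc hKo))⁻¹) hbij, ?_, ?_⟩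
  · -- anti-multiplicativity
    intro S T x h hh
    set A : G → ℂ := (((T : Module.End ℂ (cInd G K)) (eI K hKc) : cInd G K) : G → ℂ) with hA
    set B : G → ℂ := (((S : Module.End ℂ (cInd G K)) (eI K hKc) : cInd G K) : G → ℂ) with hB
    set c : ℂ := μ (eC K hKc hKo) with hc
    have hAl : ∀ k ∈ K, ∀ g, A (k * g) = A g :=
      fun k hk g => ((T : Module.End ℂ (cInd G K)) (eI K hKc)).2.2 k hk g
    have hAr : ∀ k ∈ K, ∀ g, A (g * k) = A g :=
      fun k hk g => Se_right_invariant K hKc T.2 k hk g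
    have hBl : ∀ k ∈ K, ∀ g, B (k * g) = B g :=
      fun k hk g => ((S : Module.End ℂ (cInd G K)) (eI K hKc)).2.2 k hk g
    have hBr : ∀ k ∈ K, ∀ g, B (g * k) = B g :=
      fun k hk g => Se_right_invariant K hKc S.2 k hk g
    have hF : (h : G → ℂ) = fun g => (c⁻¹ * A g⁻¹) * (c⁻¹ * B (x⁻¹ * g)) := by
      rw [hh]
      funext g
      rw [LinearEquiv.ofBijective_apply, LinearEquiv.ofBijective_apply,
        PhiMap_apply, PhiMap_apply]
      rw [show (g⁻¹ * x)⁻¹ = x⁻¹ * g by group]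
    have hFr : ∀ k ∈ K, ∀ g, ((h : G → ℂ)) (g * k) = (h : G → ℂ) g := by
      intro k hk g
      rw [hF]
      show (c⁻¹ * A (g * k)⁻¹) * (c⁻¹ * B (x⁻¹ * (g * k)))
        = (c⁻¹ * A g⁻¹) * (c⁻¹ * B (x⁻¹ * g))
      rw [show (g * k)⁻¹ = k⁻¹ * g⁻¹ by group, hAl k⁻¹ (K.inv_mem hk) g⁻¹,
        show x⁻¹ * (g * k) = (x⁻¹ * g) * k by group, hBr k hk (x⁻¹ * g)]
    have hAc : IsCompact (tsupport A) :=
      ((T : Module.End ℂ (cInd G K)) (eI K hKc)).2.1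
    have hsub : {p : G ⧸ K | (h : G → ℂ) p.out ≠ 0}
        ⊆ (fun y : G => (QuotientGroup.mk y : G ⧸ K)) '' (tsupport A)⁻¹ := by
      intro p hp
      simp only [Set.mem_setOf_eq, hF] at hp
      have hA0 : A p.out⁻¹ ≠ 0 := by
        intro h0
        exact hp (by rw [h0]; ring)
      exact ⟨p.out, by simpa using subset_tsupport A hA0, ql_out_eq K p⟩
    have hfin : {p : G ⧸ K | (h : G → ℂ) p.out ≠ 0}.Finite :=
      (finite_ql_image K hKo hAc.inv).subset hsub
    have hμh : μ h = (∑ᶠ p : G ⧸ K, (h : G → ℂ) p.out) * c :=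
      mu_eq K μ hμ hKc hKo hFr hfin h rfl
    have hfin2 : (Function.support fun p : G ⧸ K => A p.out⁻¹ * B (x⁻¹ * p.out)).Finite := by
      refine (finite_ql_image K hKo hAc.inv).subset ?_
      intro p hp
      simp only [Function.mem_support] at hp
      have hA0 : A p.out⁻¹ ≠ 0 := fun h0 => hp (by rw [h0, zero_mul])
      exact ⟨p.out, by simpa using subset_tsupport A hA0, ql_out_eq K p⟩
    have hsum : ∑ᶠ p : G ⧸ K, (h : G → ℂ) p.out
        = c⁻¹ * c⁻¹ * ∑ᶠ p : G ⧸ K, A p.out⁻¹ * B (x⁻¹ * p.out) := by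
      rw [mul_finsum _ (c⁻¹ * c⁻¹)]
      refine finsum_congr fun p => ?_
      rw [hF]
      ring
    have hreindex : ∑ᶠ p : G ⧸ K, A p.out⁻¹ * B (x⁻¹ * p.out)
        = ∑ᶠ q : Qr K, A q.out * B (x⁻¹ * q.out⁻¹) :=
      finsum_reindex K hAl hBr x
    have hlhs : ((LinearEquiv.ofBijective (PhiMap K hKc c⁻¹) hbij (S * T)
          : HeckeSpace G K) : G → ℂ) x
        = c⁻¹ * ∑ᶠ q : Qr K, A q.out * B (x⁻¹ * q.out⁻¹) := by
      rw [LinearEquiv.ofBijective_apply, PhiMap_apply]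
      rw [show ((S * T : EquivariantEnd G K) : Module.End ℂ (cInd G K))
          = (S : Module.End ℂ (cInd G K)) * (T : Module.End ℂ (cInd G K)) from rfl]
      rw [Module.End.mul_apply]
      rw [equivariant_apply K hKc S.2 hKo ((T : Module.End ℂ (cInd G K)) (eI K hKc)) x⁻¹]
    rw [hlhs, hμh, hsum, hreindex]
    field_simp
  · -- unit
    intro hK hhK
    have hKeq : hK = eC K hKc hKo := Subtype.ext hhK
    subst hKeq
    funext x
    rw [LinearEquiv.ofBijective_apply, PhiMap_apply]
    rw [show ((1 : EquivariantEnd G K) : Module.End ℂ (cInd G K))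
        = (1 : Module.End ℂ (cInd G K)) from rfl]
    rw [Module.End.one_apply]
    rw [show ((eI K hKc : cInd G K) : G → ℂ) x⁻¹ = eFun K x⁻¹ from rfl]
    rw [eFun_inv]
    rfl
end

section
/- Let A be a p-adically complete commutative ring. The multiplicative monoid A^♭ = lim_{x ↦ x^p} A (inverse limit along the p-power map), equipped with the addition (x + y)_i = lim_{n→∞} (x_{i−n} + y_{i−n})^{p^n}, is a commutative ring, and the natural projection A^♭ → lim_{x ↦ x^p} A/pA is an isomorphism of rings; moreover A^♭ is a perfect ring of characteristic p. -/
open Filter Topology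

/-- The tilt `A^♭ = lim_{x ↦ x^p} A` as a bare type: sequences `(x_i)_{i ≤ 0}`
(indexed here by `n ↦ x_{-n}`) with `x_{i-1}^p = x_i`. -/
def PTilt (p : ℕ) (A : Type*) [CommRing A] : Type _ :=
  {x : ℕ → A // ∀ n : ℕ, (x (n + 1)) ^ p = x n}

/-- The topology of `A` is the `p`-adic topology: the sets `pⁿA` form a
fundamental system of neighborhoods of `0`. -/
def PAdicBasis (p : ℕ) (A : Type*) [CommRing A] [TopologicalSpace A] : Prop :=
  (∀ n : ℕ, {a : A | ∃ b : A, a = (p : A) ^ n * b} ∈ 𝓝 (0 : A)) ∧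
  (∀ U ∈ 𝓝 (0 : A), ∃ n : ℕ, {a : A | ∃ b : A, a = (p : A) ^ n * b} ⊆ U)

/-- `A` is `p`-adically complete: every `p`-adic Cauchy sequence converges. -/
def PAdicComplete (p : ℕ) (A : Type*) [CommRing A] [TopologicalSpace A] : Prop :=
  ∀ f : ℕ → A,
    (∀ n : ℕ, ∃ N : ℕ, ∀ j k : ℕ, N ≤ j → N ≤ k →
      ∃ b : A, f j - f k = (p : A) ^ n * b) →
    ∃ L : A, Tendsto f atTop (𝓝 L)

/-- The natural projection `A^♭ → lim_{x ↦ x^p} A/pA`. -/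
def ptiltToMod (p : ℕ) (A : Type*) [CommRing A] :
    PTilt p A → {y : ℕ → A ⧸ Ideal.span ({(p : A)} : Set A) //
      ∀ n : ℕ, (y (n + 1)) ^ p = y n} :=
  fun x => ⟨fun n => Ideal.Quotient.mk _ (x.1 n), fun n => by
    rw [← map_pow, x.2 n]⟩

/-- The required properties of the ring structure on the tilt `A^♭`:
multiplication is componentwise, addition is given by the limit
`(x + y)_i = lim_n (x_{i-n} + y_{i-n})^{p^n}`, the projection to
`lim_{x ↦ x^p} A/pA` is an isomorphism of rings, and `A^♭` is a perfect
ring of characteristic `p`. -/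
def TiltSpec (p : ℕ) (A : Type*) [CommRing A] [TopologicalSpace A]
    (R : CommRing (PTilt p A)) : Prop :=
  letI := R
  -- multiplication is componentwise
  (∀ x y : PTilt p A, ∀ n : ℕ, (x * y).1 n = x.1 n * y.1 n) ∧
  -- addition is the limit of `(x_{i-n} + y_{i-n})^{p^n}`
  (∀ x y : PTilt p A, ∀ n : ℕ,
    Tendsto (fun k : ℕ => (x.1 (n + k) + y.1 (n + k)) ^ p ^ k)
      atTop (𝓝 ((x + y).1 n))) ∧
  -- the projection `A^♭ → lim A/pA` is a bijective ring homomorphism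
  Function.Bijective (ptiltToMod p A) ∧
  (∀ x y : PTilt p A, ∀ n : ℕ,
    (ptiltToMod p A (x * y)).1 n = (ptiltToMod p A x).1 n * (ptiltToMod p A y).1 n) ∧
  (∀ x y : PTilt p A, ∀ n : ℕ,
    (ptiltToMod p A (x + y)).1 n = (ptiltToMod p A x).1 n + (ptiltToMod p A y).1 n) ∧
  (ptiltToMod p A 1).1 0 = 1 ∧
  -- `A^♭` has characteristic `p` and is perfect
  ((p : PTilt p A) = 0) ∧
  Function.Bijective (fun x : PTilt p A => x ^ p)

section TiltAux

variable {p : ℕ} {A : Type*} [CommRing A] [TopologicalSpace A]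

lemma PTilt.pow_shift (x : PTilt p A) (n k : ℕ) : x.1 (n + k) ^ p ^ k = x.1 n := by
  induction k with
  | zero => simp
  | succ k ih =>
    rw [pow_succ', pow_mul, show n + (k + 1) = (n + k) + 1 from rfl, x.2 (n + k), ih]

lemma quot_p_zero (p : ℕ) (A : Type*) [CommRing A] :
    ((p : ℕ) : A ⧸ Ideal.span ({(p : A)} : Set A)) = 0 := by
  rw [← map_natCast (Ideal.Quotient.mk (Ideal.span ({(p : A)} : Set A)))]
  exact Ideal.Quotient.eq_zero_iff_mem.mpr (Ideal.mem_span_singleton_self _)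

lemma padic_tendsto [IsTopologicalRing A] (hbasis : PAdicBasis p A) {f : ℕ → A} {L : A}
    (h : ∀ k, (p : A) ^ k ∣ L - f k) : Tendsto f atTop (𝓝 L) := by
  rw [← tendsto_sub_nhds_zero_iff, tendsto_def]
  intro U hU
  obtain ⟨n, hn⟩ := hbasis.2 U hU
  filter_upwards [eventually_ge_atTop n] with k hk
  obtain ⟨b, hb⟩ := (pow_dvd_pow (p : A) hk).trans (h k)
  exact hn ⟨-b, by rw [mul_neg, ← hb]; ring⟩

lemma padic_eq_zero [IsTopologicalRing A] [T2Space A] (hbasis : PAdicBasis p A) {a : A}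
    (h : ∀ k, (p : A) ^ k ∣ a) : a = 0 :=
  tendsto_nhds_unique (f := fun _ : ℕ => a) tendsto_const_nhds
    (padic_tendsto hbasis fun k => by rw [zero_sub, dvd_neg]; exact h k)

/-- `lim_{x ↦ x^p} A/pA` as a subring of `ℕ → A/pA`. -/
def TiltModSubring (p : ℕ) (hp : p.Prime) (A : Type*) [CommRing A] :
    Subring (ℕ → A ⧸ Ideal.span ({(p : A)} : Set A)) where
  carrier := {y | ∀ n : ℕ, (y (n + 1)) ^ p = y n}
  one_mem' n := one_pow p
  mul_mem' {a b} ha hb n := by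
    show (a (n + 1) * b (n + 1)) ^ p = a n * b n
    rw [mul_pow, ha n, hb n]
  zero_mem' n := zero_pow hp.ne_zero
  add_mem' {a b} ha hb n := by
    show (a (n + 1) + b (n + 1)) ^ p = a n + b n
    rw [add_pow_prime_eq hp, quot_p_zero, zero_mul, zero_mul, zero_mul, add_zero, ha n, hb n]
  neg_mem' {a} ha n := by
    show (-(a (n + 1))) ^ p = -(a n)
    have hm : ((-1 : A ⧸ Ideal.span ({(p : A)} : Set A)) ^ p) = -1 := by
      rcases hp.eq_two_or_odd' with h2 | hodd
      · subst h2
        rw [neg_one_sq]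
        apply eq_neg_of_add_eq_zero_left
        rw [one_add_one_eq_two]
        exact_mod_cast quot_p_zero 2 A
      · exact hodd.neg_one_pow
    rw [neg_pow, hm, ha n, neg_one_mul]

end TiltAux

/-- **The tilt of a `p`-adically complete ring is a perfect ring of
characteristic `p`**: the monoid `A^♭ = lim_{x ↦ x^p} A` with componentwise
multiplication and limit addition is a commutative ring, isomorphic to
`lim_{x ↦ x^p} A/pA` via the natural projection, and perfect of characteristic `p`. -/
theorem tilt_is_perfect_ring (p : ℕ) (hp : p.Prime) (A : Type*) [CommRing A]
    [TopologicalSpace A] [IsTopologicalRing A] [T2Space A]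
    (hbasis : PAdicBasis p A) (hcomplete : PAdicComplete p A) :
    ∃ R : CommRing (PTilt p A), TiltSpec p A R := by
  classical
  haveI := Fact.mk hp
  set I : Ideal A := Ideal.span ({(p : A)} : Set A) with hIdef
  have hmk : ∀ a b : A, Ideal.Quotient.mk I a = Ideal.Quotient.mk I b ↔ (p : A) ∣ a - b := by
    intro a b
    rw [Ideal.Quotient.eq, hIdef, Ideal.mem_span_singleton]
  -- injectivity of the reduction map
  have hinj : Function.Injective (ptiltToMod p A) := by
    intro x x' hxx'
    apply Subtype.ext
    funext n
    rw [← sub_eq_zero]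
    apply padic_eq_zero hbasis
    intro k
    have h1 : (p : A) ∣ x.1 (n + k) - x'.1 (n + k) := by
      rw [← hmk]
      exact congrFun (congrArg Subtype.val hxx') (n + k)
    have h2 := dvd_sub_pow_of_dvd_sub h1 k
    rw [PTilt.pow_shift, PTilt.pow_shift] at h2
    exact (pow_dvd_pow _ k.le_succ).trans h2
  -- key divisibility: closedness of `pᵐA`
  have hJ : ∀ m : ℕ, IsClosed {a : A | (p : A) ^ m ∣ a} := by
    intro m
    let J : AddSubgroup A :=
      { carrier := {a : A | (p : A) ^ m ∣ a}
        zero_mem' := dvd_zero _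
        add_mem' := fun ha hb => dvd_add ha hb
        neg_mem' := fun ha => dvd_neg.mpr ha }
    have hopen : IsOpen (J : Set A) := by
      apply AddSubgroup.isOpen_of_mem_nhds (g := (0 : A))
      refine Filter.mem_of_superset (hbasis.1 m) ?_
      rintro a ⟨b, rfl⟩
      exact ⟨b, rfl⟩
    exact J.isClosed_of_isOpen hopen
  -- surjectivity of the reduction map
  have hsurj : Function.Surjective (ptiltToMod p A) := by
    intro y
    choose l hl using fun n => Ideal.Quotient.mk_surjective (I := I) (y.1 n)
    set g : ℕ → ℕ → A := fun n k => l (n + k) ^ p ^ k with hg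
    have hstep : ∀ n k, (p : A) ^ (k + 1) ∣ g n (k + 1) - g n k := by
      intro n k
      have h1 : (p : A) ∣ l (n + k + 1) ^ p - l (n + k) := by
        rw [← hmk, map_pow, hl, hl]
        exact y.2 (n + k)
      have h2 := dvd_sub_pow_of_dvd_sub h1 k
      have h3 : g n (k + 1) = (l (n + k + 1) ^ p) ^ p ^ k := by
        show l (n + (k + 1)) ^ p ^ (k + 1) = _
        rw [show n + (k + 1) = (n + k) + 1 from rfl, pow_succ', pow_mul]
      rw [h3]
      exact h2
    have htel : ∀ n k j, k ≤ j → (p : A) ^ (k + 1) ∣ g n j - g n k := by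
      intro n k j hkj
      induction j, hkj using Nat.le_induction with
      | base => simp
      | succ j hj ih =>
        have : g n (j + 1) - g n k = (g n (j + 1) - g n j) + (g n j - g n k) := by ring
        rw [this]
        exact dvd_add ((pow_dvd_pow _ (by omega)).trans (hstep n j)) ih
    have hcauchy : ∀ n, ∃ L, Tendsto (g n) atTop (𝓝 L) := by
      intro n
      apply hcomplete (g n)
      intro m
      refine ⟨m, fun j k hj hk => ?_⟩
      have h1 := htel n m j hj
      have h2 := htel n m k hk
      have h3 : (p : A) ^ m ∣ g n j - g n k := by
        refine (pow_dvd_pow _ (Nat.le_succ m)).trans ?_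
        have := dvd_sub h1 h2
        rwa [sub_sub_sub_cancel_right] at this
      exact h3
    choose x hx using hcauchy
    have hlim_dvd : ∀ n k, (p : A) ^ (k + 1) ∣ x n - g n k := by
      intro n k
      have ht : Tendsto (fun j => g n j - g n k) atTop (𝓝 (x n - g n k)) :=
        (hx n).sub tendsto_const_nhds
      refine (hJ (k + 1)).mem_of_tendsto ht ?_
      filter_upwards [eventually_ge_atTop k] with j hj using htel n k j hj
    have hcompat : ∀ n, x (n + 1) ^ p = x n := by
      intro n
      have h1 : Tendsto (fun k => g (n + 1) k ^ p) atTop (𝓝 (x (n + 1) ^ p)) :=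
        (hx (n + 1)).pow p
      have h2 : ∀ k, g (n + 1) k ^ p = g n (k + 1) := by
        intro k
        rw [hg]
        show (l (n + 1 + k) ^ p ^ k) ^ p = l (n + (k + 1)) ^ p ^ (k + 1)
        rw [← pow_mul, ← pow_succ, show n + 1 + k = n + (k + 1) from by omega]
      have h3 : Tendsto (fun k => g n (k + 1)) atTop (𝓝 (x n)) :=
        (hx n).comp (tendsto_add_atTop_nat 1)
      refine tendsto_nhds_unique ?_ h3
      simpa only [h2] using h1
    refine ⟨⟨x, hcompat⟩, ?_⟩
    apply Subtype.ext
    funext n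
    show Ideal.Quotient.mk I (x n) = y.1 n
    have h0 : (p : A) ∣ x n - l n := by
      have := hlim_dvd n 0
      simpa [hg] using this
    rw [← hl n]
    exact (hmk _ _).mpr h0
  have hbij : Function.Bijective (ptiltToMod p A) := ⟨hinj, hsurj⟩
  -- transfer the ring structure
  letI : CommRing {y : ℕ → A ⧸ Ideal.span ({(p : A)} : Set A) //
      ∀ n : ℕ, (y (n + 1)) ^ p = y n} :=
    inferInstanceAs (CommRing (TiltModSubring p hp A))
  let e : PTilt p A ≃ {y : ℕ → A ⧸ Ideal.span ({(p : A)} : Set A) //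
      ∀ n : ℕ, (y (n + 1)) ^ p = y n} := Equiv.ofBijective (ptiltToMod p A) hbij
  letI R : CommRing (PTilt p A) := e.commRing
  have hadd_def : ∀ x y : PTilt p A, x + y = e.symm (e x + e y) := fun _ _ => rfl
  have hmul_def : ∀ x y : PTilt p A, x * y = e.symm (e x * e y) := fun _ _ => rfl
  have hone_def : (1 : PTilt p A) = e.symm 1 := rfl
  have he : ∀ (z : PTilt p A) (n : ℕ), (e z).1 n = Ideal.Quotient.mk I (z.1 n) :=
    fun _ _ => rfl
  -- multiplication is componentwise
  have hmulc : ∀ x y : PTilt p A, ∀ n : ℕ, (x * y).1 n = x.1 n * y.1 n := by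
    intro x y n
    have hwc : ∀ m : ℕ, (x.1 (m + 1) * y.1 (m + 1)) ^ p = x.1 m * y.1 m := by
      intro m
      rw [mul_pow, x.2 m, y.2 m]
    set w : PTilt p A := ⟨fun m => x.1 m * y.1 m, hwc⟩ with hwdef
    have hew : e w = e x * e y := by
      apply Subtype.ext
      funext m
      show Ideal.Quotient.mk I (w.1 m) = (e x).1 m * (e y).1 m
      rw [he, he, hwdef]
      exact map_mul _ _ _
    have : x * y = w := by rw [hmul_def, ← hew, e.symm_apply_apply]
    rw [this]
  -- components of one
  have honec : ∀ n : ℕ, (1 : PTilt p A).1 n = 1 := by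
    have hc1 : ∀ m : ℕ, ((1 : A)) ^ p = (1 : A) := fun _ => one_pow p
    set c1 : PTilt p A := ⟨fun _ => (1 : A), fun _ => one_pow p⟩ with hc1def
    have hec : e c1 = 1 := by
      apply Subtype.ext
      funext m
      show Ideal.Quotient.mk I ((1 : A)) = _
      rw [map_one]
      rfl
    intro n
    have : (1 : PTilt p A) = c1 := by rw [hone_def, ← hec, e.symm_apply_apply]
    rw [this]
  -- components of powers
  have hpowc : ∀ (x : PTilt p A) (m n : ℕ), (x ^ m).1 n = x.1 n ^ m := by
    intro x m
    induction m with
    | zero => intro n; rw [pow_zero, pow_zero]; exact honec n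
    | succ m ih => intro n; rw [pow_succ, pow_succ, hmulc, ih]
  -- the reduction map is additive
  have haddm : ∀ x y : PTilt p A, ∀ n : ℕ,
      Ideal.Quotient.mk I ((x + y).1 n) =
        Ideal.Quotient.mk I (x.1 n) + Ideal.Quotient.mk I (y.1 n) := by
    intro x y n
    have h1 : e (x + y) = e x + e y := by rw [hadd_def, e.apply_symm_apply]
    have h2 := congrFun (congrArg Subtype.val h1) n
    rw [he] at h2
    exact h2
  -- addition is the limit formula
  have haddc : ∀ x y : PTilt p A, ∀ n : ℕ,
      Tendsto (fun k : ℕ => (x.1 (n + k) + y.1 (n + k)) ^ p ^ k)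
        atTop (𝓝 ((x + y).1 n)) := by
    intro x y n
    apply padic_tendsto hbasis
    intro k
    have h1 : (p : A) ∣ (x + y).1 (n + k) - (x.1 (n + k) + y.1 (n + k)) := by
      rw [← hmk, map_add]
      exact haddm x y (n + k)
    have h2 := dvd_sub_pow_of_dvd_sub h1 k
    rw [PTilt.pow_shift] at h2
    exact (pow_dvd_pow _ k.le_succ).trans h2
  -- ring equivalence
  let φ : PTilt p A ≃+* {y : ℕ → A ⧸ Ideal.span ({(p : A)} : Set A) //
      ∀ n : ℕ, (y (n + 1)) ^ p = y n} :=
    { e with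
      map_mul' := fun x y => by rw [hmul_def]; exact e.apply_symm_apply _
      map_add' := fun x y => by rw [hadd_def]; exact e.apply_symm_apply _ }
  -- characteristic p
  have hcharp : (p : PTilt p A) = 0 := by
    have hpT0 : ((p : ℕ) : {y : ℕ → A ⧸ Ideal.span ({(p : A)} : Set A) //
        ∀ n : ℕ, (y (n + 1)) ^ p = y n}) = 0 := by
      apply Subtype.ext
      have hcast : (((p : ℕ) : {y : ℕ → A ⧸ Ideal.span ({(p : A)} : Set A) //
          ∀ n : ℕ, (y (n + 1)) ^ p = y n}) : ℕ → A ⧸ Ideal.span ({(p : A)} : Set A)) =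
          ((p : ℕ) : ℕ → A ⧸ Ideal.span ({(p : A)} : Set A)) := by
        exact_mod_cast rfl
      rw [hcast]
      funext n
      exact quot_p_zero p A
    have : φ (p : PTilt p A) = φ 0 := by rw [map_natCast, map_zero, hpT0]
    exact φ.injective this
  -- Frobenius is bijective
  have hfrob : Function.Bijective (fun x : PTilt p A => x ^ p) := by
    let σ : PTilt p A → PTilt p A := fun x => ⟨fun n => x.1 (n + 1), fun n => x.2 (n + 1)⟩
    have hσ1 : ∀ x : PTilt p A, σ (x ^ p) = x := by
      intro x
      apply Subtype.ext
      funext n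
      show (x ^ p).1 (n + 1) = x.1 n
      rw [hpowc, x.2 n]
    have hσ2 : ∀ x : PTilt p A, (σ x) ^ p = x := by
      intro x
      apply Subtype.ext
      funext n
      show ((σ x) ^ p).1 n = x.1 n
      rw [hpowc]
      exact x.2 n
    exact Function.bijective_iff_has_inverse.mpr ⟨σ, hσ1, hσ2⟩
  refine ⟨R, hmulc, haddc, hbij, ?_, ?_, ?_, hcharp, hfrob⟩
  · intro x y n
    show Ideal.Quotient.mk I ((x * y).1 n) = _
    rw [hmulc]
    exact map_mul _ _ _
  · intro x y n
    exact haddm x y n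
  · show Ideal.Quotient.mk I ((1 : PTilt p A).1 0) = 1
    rw [honec 0]
    exact map_one _
end

section
/- Let Γ be a finitely generated group acting on an affine group scheme Ĝ over a base ring R. The functor sending a commutative R-algebra Λ to the set of group-homomorphism sections of the projection Ĝ(Λ) ⋊ Γ → Γ is representable by an affine scheme over R, namely a closed subscheme of Ĝ^S for any finite generating set S of Γ. -/
open CategoryTheory

variable {R : CommRingCat.{0}} (G : Under R ⥤ GrpCat.{0})
  (Γ : Type) [Group Γ] (φ : Γ →* Aut G)

/-- The functor of 1-cocycles `Λ ↦ Z¹(Γ, Ĝ(Λ))`: maps `c : Γ → Ĝ(Λ)` with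
`c(γγ') = c(γ) · γ(c(γ'))`, equivalently group-homomorphism sections of
`Ĝ(Λ) ⋊ Γ → Γ`. -/
def cocycleFunctor : Under R ⥤ Type where
  obj Λ := {c : Γ → G.obj Λ // ∀ γ₁ γ₂ : Γ,
    c (γ₁ * γ₂) = c γ₁ * ((φ γ₁).hom.app Λ) (c γ₂)}
  map {Λ Λ'} f := TypeCat.ofHom fun c => ⟨fun γ => (G.map f) (c.1 γ), by
    intro γ₁ γ₂
    have h := congrArg (fun m : G.obj Λ ⟶ G.obj Λ' => m (c.1 γ₂))
      ((φ γ₁).hom.naturality f)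
    simp only [CategoryTheory.comp_apply] at h
    show (G.map f) (c.1 (γ₁ * γ₂)) = _
    rw [c.2 γ₁ γ₂, map_mul]
    congr 1
    exact (ConcreteCategory.congr_hom ((φ γ₁).hom.naturality f) (c.1 γ₂)).symm⟩
  map_id := by intro Λ; ext c γ; simp
  map_comp := by intro Λ₁ Λ₂ Λ₃ f g; ext c γ; simp

/-- The functor `Λ ↦ Ĝ(Λ)^S` of `S`-tuples of points of `Ĝ`. -/
def tupleFunctor (S : Finset Γ) : Under R ⥤ Type where
  obj Λ := S → G.obj Λ
  map f := TypeCat.ofHom fun t s => (G.map f) (t s)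
  map_id := by intro Λ; ext t s; simp
  map_comp := by intro Λ₁ Λ₂ Λ₃ f g; ext t s; simp

variable {R : CommRingCat.{0}} (G : Under R ⥤ GrpCat.{0})
  (Γ : Type) [Group Γ] (φ : Γ →* Aut G)

/-- The action of `Γ` on `G.obj Λ` as a homomorphism to `MulAut`. -/
def actAux (Λ : Under R) : Γ →* MulAut (G.obj Λ) where
  toFun γ :=
    { toFun := (φ γ).hom.app Λ
      invFun := (φ γ).inv.app Λ
      left_inv := fun x =>
        ConcreteCategory.congr_hom ((φ γ).hom_inv_id_app Λ) x
      right_inv := fun x =>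
        ConcreteCategory.congr_hom ((φ γ).inv_hom_id_app Λ) x
      map_mul' := fun x y => map_mul _ x y }
  map_one' := by
    ext x
    exact congrArg (fun i : Aut G => (i.hom.app Λ) x) (map_one φ)
  map_mul' γ₁ γ₂ := by
    ext x
    exact congrArg (fun i : Aut G => (i.hom.app Λ) x) (map_mul φ γ₁ γ₂)

variable (S : Finset Γ)

/-- The projection from the free group on `S` to `Γ`. -/
def piAux : FreeGroup S →* Γ := FreeGroup.lift Subtype.val

lemma piAux_surjective (hS : Subgroup.closure (S : Set Γ) = ⊤) :
    Function.Surjective (piAux Γ S) := by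
  rw [← MonoidHom.range_eq_top, piAux, FreeGroup.range_lift_eq_closure]
  rw [Subtype.range_val_subtype]
  simpa using hS

/-- The homomorphism from the free group determined by a tuple. -/
def PhiAux (Λ : Under R) (t : S → G.obj Λ) :
    FreeGroup S →* (G.obj Λ) ⋊[actAux G Γ φ Λ] Γ :=
  FreeGroup.lift fun s => ⟨t s, (s : Γ)⟩

lemma PhiAux_right (Λ : Under R) (t : S → G.obj Λ) (w : FreeGroup S) :
    (PhiAux G Γ φ S Λ t w).right = piAux Γ S w := by
  have : (SemidirectProduct.rightHom).comp (PhiAux G Γ φ S Λ t) = piAux Γ S := by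
    apply FreeGroup.ext_hom
    intro s
    simp [PhiAux, piAux, SemidirectProduct.rightHom]
  exact congrArg (fun m : FreeGroup S →* Γ => m w) this

lemma actAux_naturality (Λ Λ' : Under R) (f : Λ ⟶ Λ') (γ : Γ) (x : G.obj Λ) :
    (G.map f) ((actAux G Γ φ Λ γ) x) = (actAux G Γ φ Λ' γ) ((G.map f) x) := by
  exact (ConcreteCategory.congr_hom ((φ γ).hom.naturality f) x).symm

/-- The morphism between semidirect products induced by `G.map f`. -/
def sdMap (Λ Λ' : Under R) (f : Λ ⟶ Λ') :
    (G.obj Λ) ⋊[actAux G Γ φ Λ] Γ →* (G.obj Λ') ⋊[actAux G Γ φ Λ'] Γ :=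
  SemidirectProduct.map (G.map f).hom (MonoidHom.id Γ) (by
    intro γ
    ext x
    exact actAux_naturality G Γ φ Λ Λ' f γ x)

lemma PhiAux_naturality (Λ Λ' : Under R) (f : Λ ⟶ Λ') (t : S → G.obj Λ) (w : FreeGroup S) :
    (PhiAux G Γ φ S Λ' (fun s => (G.map f) (t s)) w).left
      = (G.map f) ((PhiAux G Γ φ S Λ t w).left) := by
  have : PhiAux G Γ φ S Λ' (fun s => (G.map f) (t s))
      = (sdMap G Γ φ Λ Λ' f).comp (PhiAux G Γ φ S Λ t) := by
    apply FreeGroup.ext_hom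
    intro s
    simp [PhiAux, sdMap]
  rw [this]
  rfl

lemma cocycle_one (Λ : Under R) (c : (cocycleFunctor G Γ φ).obj Λ) : c.1 1 = 1 := by
  have h := c.2 1 1
  have e : ((φ 1).hom.app Λ) (c.1 1) = c.1 1 :=
    congrArg (fun i : Aut G => (i.hom.app Λ) (c.1 1)) (map_one φ)
  rw [one_mul, e] at h
  have : c.1 1 * 1 = c.1 1 * c.1 1 := by rw [mul_one]; exact h
  exact (mul_left_cancel this).symm

/-- The section of `G(Λ) ⋊ Γ → Γ` determined by a cocycle. -/
def sectAux (Λ : Under R) (c : (cocycleFunctor G Γ φ).obj Λ) :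
    Γ →* (G.obj Λ) ⋊[actAux G Γ φ Λ] Γ where
  toFun γ := ⟨c.1 γ, γ⟩
  map_one' := SemidirectProduct.ext (cocycle_one G Γ φ Λ c) rfl
  map_mul' γ₁ γ₂ := SemidirectProduct.ext (c.2 γ₁ γ₂) rfl

lemma sectAux_comp_piAux (Λ : Under R) (c : (cocycleFunctor G Γ φ).obj Λ) (w : FreeGroup S) :
    PhiAux G Γ φ S Λ (fun s => c.1 s) w = sectAux G Γ φ Λ c (piAux Γ S w) := by
  have : PhiAux G Γ φ S Λ (fun s => c.1 s)
      = (sectAux G Γ φ Λ c).comp (piAux Γ S) := by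
    apply FreeGroup.ext_hom
    intro s
    simp [PhiAux, piAux, sectAux]
  rw [this]; rfl

lemma cocycle_ext (hS : Subgroup.closure (S : Set Γ) = ⊤) (Λ : Under R)
    (c c' : (cocycleFunctor G Γ φ).obj Λ) (h : ∀ s : S, c.1 s = c'.1 s) : c = c' := by
  have hle : Subgroup.closure (S : Set Γ)
      ≤ MonoidHom.eqLocus (sectAux G Γ φ Λ c) (sectAux G Γ φ Λ c') := by
    rw [Subgroup.closure_le]
    intro γ hγ
    exact SemidirectProduct.ext (h ⟨γ, hγ⟩) rfl
  rw [hS] at hle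
  apply Subtype.ext; funext γ
  have := hle (Subgroup.mem_top γ)
  exact congrArg SemidirectProduct.left this

lemma exists_cocycle (hS : Subgroup.closure (S : Set Γ) = ⊤) (Λ : Under R) (t : S → G.obj Λ)
    (h : ∀ w : FreeGroup S, piAux Γ S w = 1 → (PhiAux G Γ φ S Λ t w).left = 1) :
    ∃ c : (cocycleFunctor G Γ φ).obj Λ, (fun s : S => c.1 s) = t := by
  have hπ := piAux_surjective Γ S hS
  have hker : (piAux Γ S).ker ≤ (PhiAux G Γ φ S Λ t).ker := by
    intro w hw
    rw [MonoidHom.mem_ker] at hw ⊢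
    exact SemidirectProduct.ext (h w hw) (by rw [PhiAux_right]; exact hw)
  let σ := (piAux Γ S).liftOfRightInverse (Function.surjInv hπ)
    (Function.rightInverse_surjInv hπ) ⟨PhiAux G Γ φ S Λ t, hker⟩
  have hσ : ∀ w : FreeGroup S, σ (piAux Γ S w) = PhiAux G Γ φ S Λ t w := fun w =>
    MonoidHom.liftOfRightInverse_comp_apply _ _ _ _ w
  have hright : ∀ γ : Γ, (σ γ).right = γ := by
    intro γ
    obtain ⟨w, rfl⟩ := hπ γ
    rw [hσ, PhiAux_right]
  refine ⟨⟨fun γ => (σ γ).left, ?_⟩, ?_⟩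
  · intro γ₁ γ₂
    have := congrArg SemidirectProduct.left (map_mul σ γ₁ γ₂)
    rw [SemidirectProduct.mul_left, hright γ₁] at this
    exact this
  · funext s
    have h1 : piAux Γ S (FreeGroup.of s) = (s : Γ) := FreeGroup.lift_apply_of
    have := hσ (FreeGroup.of s)
    rw [h1] at this
    simp only [this, PhiAux, FreeGroup.lift_apply_of]

/-- **Representability of the scheme of 1-cocycles**: if `Γ` is generated by a
finite set `S` and acts on an affine group scheme `Ĝ` over `R` (an affine
scheme means a corepresentable points functor), then the functor
`Λ ↦ Z¹(Γ, Ĝ(Λ))` of sections of `Ĝ(Λ) ⋊ Γ → Γ` is representable by an affine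
scheme over `R`, namely a closed subscheme of `Ĝ^S` (its coordinate ring is a
quotient of that of `Ĝ^S`). -/
theorem cocycle_functor_corepresentable
    (A : Under R) (repA : (G ⋙ forget GrpCat).CorepresentableBy A)
    (S : Finset Γ) (hS : Subgroup.closure (S : Set Γ) = ⊤)
    (AS : Under R) (repAS : (tupleFunctor G Γ S).CorepresentableBy AS) :
    ∃ (B : Under R) (q : AS ⟶ B), Function.Surjective q.right ∧
      Nonempty ((cocycleFunctor G Γ φ).CorepresentableBy B) := by
  classical
  -- the universal tuple
  set u : S → G.obj AS := repAS.homEquiv (𝟙 AS) with hu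
  -- universal points and their classifying maps
  set L : FreeGroup S → G.obj AS := fun w => (PhiAux G Γ φ S AS u w).left with hL
  set e : FreeGroup S → (A ⟶ AS) := fun w => repA.homEquiv.symm (L w) with he
  set η : A ⟶ AS := repA.homEquiv.symm (1 : G.obj AS) with hη
  -- the tuple classified by `f : AS ⟶ Λ`
  have htuple : ∀ (Λ : Under R) (f : AS ⟶ Λ),
      repAS.homEquiv f = fun s => (G.map f) (u s) := by
    intro Λ f
    rw [show f = 𝟙 AS ≫ f from (Category.id_comp f).symm, repAS.homEquiv_comp]
    rfl
  have hmapL : ∀ (Λ : Under R) (f : AS ⟶ Λ) (w : FreeGroup S),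
      (PhiAux G Γ φ S Λ (repAS.homEquiv f) w).left = (G.map f) (L w) := by
    intro Λ f w
    rw [htuple Λ f]
    exact PhiAux_naturality G Γ φ S AS Λ f u w
  have hLe : ∀ (Λ : Under R) (f : AS ⟶ Λ) (w : FreeGroup S),
      (G.map f) (L w) = repA.homEquiv (e w ≫ f) := by
    intro Λ f w
    rw [repA.homEquiv_comp]
    exact congrArg (G.map f) (repA.homEquiv.apply_symm_apply (L w)).symm
  have hone : ∀ (Λ : Under R) (f : AS ⟶ Λ),
      (1 : G.obj Λ) = repA.homEquiv (η ≫ f) := by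
    intro Λ f
    rw [repA.homEquiv_comp]
    have h1 : repA.homEquiv η = (1 : G.obj AS) := repA.homEquiv.apply_symm_apply _
    rw [h1]
    exact (map_one (G.map f).hom).symm
  -- the generating set of the ideal
  set genSet : Set AS.right :=
    {x | ∃ w : FreeGroup S, piAux Γ S w = 1 ∧ ∃ a : A.right,
      x = (e w).right a - η.right a} with hgen
  -- translation of the cocycle condition into ring equations
  have cond_iff : ∀ (Λ : Under R) (f : AS ⟶ Λ),
      (∀ w : FreeGroup S, piAux Γ S w = 1 →
        (PhiAux G Γ φ S Λ (repAS.homEquiv f) w).left = 1)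
      ↔ (∀ x ∈ genSet, f.right x = 0) := by
    intro Λ f
    constructor
    · rintro h x ⟨w, hw, a, rfl⟩
      have h1 : (e w ≫ f) = (η ≫ f) := by
        apply repA.homEquiv.injective
        rw [← hLe Λ f w, ← hone Λ f, ← hmapL Λ f w, h w hw]
      have h2 : f.right ((e w).right a) = f.right (η.right a) := by
        have := congrArg (fun m : A ⟶ Λ => m.right a) h1
        simpa using this
      rw [map_sub, h2, sub_self]
    · intro h w hw
      have h2 : (e w ≫ f) = (η ≫ f) := by
        apply Under.UnderMorphism.ext
        apply CommRingCat.hom_ext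
        apply RingHom.ext
        intro a
        have := h _ ⟨w, hw, a, rfl⟩
        rw [map_sub, sub_eq_zero] at this
        simpa using this
      rw [hmapL Λ f w, hLe Λ f w, h2, ← hone Λ f]
  -- construct the quotient
  set I : Ideal AS.right := Ideal.span genSet with hI
  set B : Under R := Under.mk (AS.hom ≫ CommRingCat.ofHom (Ideal.Quotient.mk I)) with hB
  set q : AS ⟶ B := Under.homMk (CommRingCat.ofHom (Ideal.Quotient.mk I)) rfl with hq
  refine ⟨B, q, Ideal.Quotient.mk_surjective, ?_⟩
  -- ring-level kill criterion
  have kill_iff : ∀ (Λ : Under R) (f : AS ⟶ Λ),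
      (∀ x ∈ genSet, f.right x = 0) ↔ I ≤ RingHom.ker f.right.hom := by
    intro Λ f
    rw [hI, Ideal.span_le]
    constructor
    · intro h x hx; exact h x hx
    · intro h x hx; exact h hx
  -- the classifying morphism of the restriction of a cocycle
  set fc : ∀ (Λ : Under R), (cocycleFunctor G Γ φ).obj Λ → (AS ⟶ Λ) :=
    fun Λ c => repAS.homEquiv.symm (fun s : S => c.1 s) with hfc
  have hfckill : ∀ (Λ : Under R) (c : (cocycleFunctor G Γ φ).obj Λ),
      ∀ x ∈ I, (fc Λ c).right x = 0 := by
    intro Λ c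
    have hcond : ∀ w : FreeGroup S, piAux Γ S w = 1 →
        (PhiAux G Γ φ S Λ (repAS.homEquiv (fc Λ c)) w).left = 1 := by
      intro w hw
      simp only [hfc]
      erw [repAS.homEquiv.apply_symm_apply]
      rw [sectAux_comp_piAux G Γ φ S Λ c w, hw, map_one]
      rfl
    have h1 := (kill_iff Λ (fc Λ c)).mp ((cond_iff Λ (fc Λ c)).mp hcond)
    intro x hx
    exact h1 hx
  -- the induced morphism out of the quotient
  set Ψ : ∀ (Λ : Under R), (cocycleFunctor G Γ φ).obj Λ → (B ⟶ Λ) :=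
    fun Λ c => Under.homMk
      (CommRingCat.ofHom (Ideal.Quotient.lift I (fc Λ c).right.hom
        (hfckill Λ c)))
      (by
        have hw := Under.w (fc Λ c)
        rw [← hw]
        rfl) with hΨ
  have hqΨ : ∀ (Λ : Under R) (c : (cocycleFunctor G Γ φ).obj Λ), q ≫ Ψ Λ c = fc Λ c := by
    intro Λ c
    apply Under.UnderMorphism.ext
    apply CommRingCat.hom_ext
    exact RingHom.ext fun x => Ideal.Quotient.lift_mk I (fc Λ c).right.hom (hfckill Λ c) ▸ rfl
  have hqepi : ∀ (Λ : Under R) (g g' : B ⟶ Λ), q ≫ g = q ≫ g' → g = g' := by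
    intro Λ g g' hgg
    apply Under.UnderMorphism.ext
    apply CommRingCat.hom_ext
    apply RingHom.ext
    intro y
    obtain ⟨x, rfl⟩ := Ideal.Quotient.mk_surjective y
    exact congrArg (fun m : AS ⟶ Λ => m.right x) hgg
  have hΨinj : ∀ (Λ : Under R), Function.Injective (Ψ Λ) := by
    intro Λ c c' hcc
    apply cocycle_ext G Γ φ S hS Λ
    intro s
    have h1 : fc Λ c = fc Λ c' := by rw [← hqΨ Λ c, ← hqΨ Λ c', hcc]
    have h2 := congrArg repAS.homEquiv h1
    simp only [hfc] at h2
    erw [repAS.homEquiv.apply_symm_apply, repAS.homEquiv.apply_symm_apply] at h2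
    exact congrFun h2 s
  have hΨsurj : ∀ (Λ : Under R), Function.Surjective (Ψ Λ) := by
    intro Λ g
    have hker : ∀ x ∈ genSet, (q ≫ g).right x = 0 := by
      intro x hx
      have h1 : (q ≫ g).right x = g.right (Ideal.Quotient.mk I x) := rfl
      have h2 : (Ideal.Quotient.mk I x : B.right) = 0 :=
        Ideal.Quotient.eq_zero_iff_mem.mpr (Ideal.subset_span hx)
      rw [h1, h2, map_zero]
    obtain ⟨c, hc⟩ := exists_cocycle G Γ φ S hS Λ (repAS.homEquiv (q ≫ g))
      ((cond_iff Λ (q ≫ g)).mpr hker)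
    refine ⟨c, ?_⟩
    apply hqepi
    rw [hqΨ, hfc]
    simp only [hc]
    exact repAS.homEquiv.symm_apply_apply (q ≫ g)
  have hΨnat : ∀ (Λ Λ' : Under R) (h : Λ ⟶ Λ') (c : (cocycleFunctor G Γ φ).obj Λ),
      Ψ Λ c ≫ h = Ψ Λ' ((cocycleFunctor G Γ φ).map h c) := by
    intro Λ Λ' h c
    apply hqepi
    rw [← Category.assoc, hqΨ, hqΨ]
    apply repAS.homEquiv.injective
    rw [repAS.homEquiv_comp]
    simp only [hfc]
    erw [repAS.homEquiv.apply_symm_apply,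
      repAS.homEquiv.apply_symm_apply]
    rfl
  refine ⟨{ homEquiv := fun {Λ} => (Equiv.ofBijective (Ψ Λ) ⟨hΨinj Λ, hΨsurj Λ⟩).symm
            homEquiv_comp := ?_ }⟩
  intro Λ Λ' h g
  apply (Equiv.ofBijective (Ψ Λ') ⟨hΨinj Λ', hΨsurj Λ'⟩).injective
  rw [Equiv.apply_symm_apply]
  show g ≫ h = Ψ Λ' ((cocycleFunctor G Γ φ).map h _)
  rw [← hΨnat]
  congr 1
  exact ((Equiv.ofBijective (Ψ Λ) ⟨hΨinj Λ, hΨsurj Λ⟩).apply_symm_apply g).symm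
end
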